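/- (Discrete entropy stability of the TeCNO flux; Lemma 2.1.) Suppose that at the two interfaces i-1/2 and i+1/2 of cell i the entropy conservation condition ⟨v_{i+1} - v_i, f̃_{i+1/2}⟩ = Ψ_{i+1} - Ψ_i holds, and that the reconstructed jumps satisfy the componentwise sign property (⟦z⟧_{i+1/2})_k · (Δz_{i+1/2})_k ≥ 0 for every component k (at both interfaces). Then the cell entropy inequality ⟨v_i, f_{i+1/2} - f_{i-1/2}⟩ ≥ q_{i+1/2} - q_{i-1/2} holds, so that along the semi-discrete scheme du_i/dt = -(f_{i+1/2} - f_{i-1/2})/h the discrete entropy production dη(u_i)/dt + (q_{i+1/2} - q_{i-1/2})/h is nonpositive. -/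
import Mathlib

open Matrix

lemma tecno_aux (d : ℕ) (Λ j : Fin d → ℝ) (A : Matrix (Fin d) (Fin d) ℝ) (v : Fin d → ℝ) :
    v ⬝ᵥ (A *ᵥ (Matrix.diagonal Λ *ᵥ j)) = ∑ k, (Aᵀ *ᵥ v) k * (Λ k * j k) := by
  rw [Matrix.dotProduct_mulVec]
  simp only [dotProduct, Matrix.mulVec_diagonal, Matrix.mulVec_transpose]

theorem tecno_entropy_stability
    (d : ℕ) (hd : 1 ≤ d)
    (vim vi vip : Fin d → ℝ) (Ψim Ψi Ψip : ℝ)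
    (ftL ftR : Fin d → ℝ)
    (RL RR : Matrix (Fin d) (Fin d) ℝ)
    (ΛL ΛR : Fin d → ℝ)
    (hΛL : ∀ k, 0 ≤ ΛL k) (hΛR : ∀ k, 0 ≤ ΛR k)
    (jL jR : Fin d → ℝ)
    (hECL : (vi - vim) ⬝ᵥ ftL = Ψi - Ψim)
    (hECR : (vip - vi) ⬝ᵥ ftR = Ψip - Ψi)
    (hsignL : ∀ k, 0 ≤ jL k * (RLᵀ *ᵥ (vi - vim)) k)
    (hsignR : ∀ k, 0 ≤ jR k * (RRᵀ *ᵥ (vip - vi)) k)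
    (fL fR : Fin d → ℝ) (qL qR : ℝ)
    (hfL : fL = ftL - (1/2 : ℝ) • (RL *ᵥ (Matrix.diagonal ΛL *ᵥ jL)))
    (hfR : fR = ftR - (1/2 : ℝ) • (RR *ᵥ (Matrix.diagonal ΛR *ᵥ jR)))
    (hqL : qL = ((1/2 : ℝ) • (vim + vi)) ⬝ᵥ fL - (Ψim + Ψi)/2)
    (hqR : qR = ((1/2 : ℝ) • (vi + vip)) ⬝ᵥ fR - (Ψi + Ψip)/2)
    (h : ℝ) (hh : 0 < h) :
    vi ⬝ᵥ (fR - fL) ≥ qR - qL ∧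
    vi ⬝ᵥ (-(1/h) • (fR - fL)) + (qR - qL)/h ≤ 0 := by
  set SR : ℝ := ∑ k, (RRᵀ *ᵥ (vip - vi)) k * (ΛR k * jR k) with hSR
  set SL : ℝ := ∑ k, (RLᵀ *ᵥ (vi - vim)) k * (ΛL k * jL k) with hSL
  have hSRnn : 0 ≤ SR :=
    Finset.sum_nonneg fun k _ => by
      have := mul_nonneg (hΛR k) (hsignR k); nlinarith [this]
  have hSLnn : 0 ≤ SL :=
    Finset.sum_nonneg fun k _ => by
      have := mul_nonneg (hΛL k) (hsignL k); nlinarith [this]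
  have hR' : (vip - vi) ⬝ᵥ fR = (Ψip - Ψi) - (1/2 : ℝ) * SR := by
    rw [hfR, dotProduct_sub, hECR, dotProduct_smul, tecno_aux]
    simp [hSR, smul_eq_mul]
  have hL' : (vi - vim) ⬝ᵥ fL = (Ψi - Ψim) - (1/2 : ℝ) * SL := by
    rw [hfL, dotProduct_sub, hECL, dotProduct_smul, tecno_aux]
    simp [hSL, smul_eq_mul]
  have key : vi ⬝ᵥ (fR - fL) - (qR - qL) = (1/4 : ℝ) * SR + (1/4 : ℝ) * SL := by
    have e1 : vip ⬝ᵥ fR - vi ⬝ᵥ fR = (Ψip - Ψi) - (1/2 : ℝ) * SR := by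
      rw [← hR', sub_dotProduct]
    have e2 : vi ⬝ᵥ fL - vim ⬝ᵥ fL = (Ψi - Ψim) - (1/2 : ℝ) * SL := by
      rw [← hL', sub_dotProduct]
    rw [hqR, hqL, dotProduct_sub, smul_dotProduct, smul_dotProduct,
      add_dotProduct, add_dotProduct, smul_eq_mul, smul_eq_mul]
    linarith
  have hmain : vi ⬝ᵥ (fR - fL) ≥ qR - qL := by linarith
  refine ⟨hmain, ?_⟩
  have : vi ⬝ᵥ (-(1/h) • (fR - fL)) = -(1/h) * (vi ⬝ᵥ (fR - fL)) := by
    rw [dotProduct_smul, smul_eq_mul]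
  rw [this]
  have hhinv : 0 < 1/h := by positivity
  calc -(1/h) * (vi ⬝ᵥ (fR - fL)) + (qR - qL)/h
      = (1/h) * ((qR - qL) - vi ⬝ᵥ (fR - fL)) := by ring
    _ ≤ 0 := by
        apply mul_nonpos_of_nonneg_of_nonpos (le_of_lt hhinv)
        linarith
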